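/- For the multiple-symbol adjustable phase shift pilots X_{k,(Q)} = √Q · U_{(φ_k mod Q),:} ⊗ X_{⌊φ_k/Q⌋}, where U is an arbitrary Q×Q unitary matrix and X_φ = √σ·D_φ·X are the one-symbol pilots, one has X_{k',(Q)} (X_{k,(Q)})^H = σ·Q·δ((φ_{k'} mod Q) − (φ_k mod Q)) · D_{⌊φ_{k'}/Q⌋ − ⌊φ_k/Q⌋}. -/
import Mathlib


open Matrix Complex Real Kronecker

/-- The diagonal phase shift matrix `D_φ = diag(f_{N,φ})`. -/
noncomputable def phaseDiag (N : ℕ) (φ : ℤ) : Matrix (Fin N) (Fin N) ℂ :=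
  Matrix.diagonal fun j : Fin N =>
    Complex.exp (-(2 * π * Complex.I * (j : ℕ) * φ) / N)

/-- One-symbol adjustable phase shift pilot `X_φ = √σ · D_φ · X`. -/
noncomputable def apsp (N : ℕ) (σ : ℝ) (X : Matrix (Fin N) (Fin N) ℂ) (φ : ℤ) :
    Matrix (Fin N) (Fin N) ℂ :=
  (Real.sqrt σ : ℂ) • (phaseDiag N φ * X)

lemma kronecker_conjT {l m n p : Type*} [Fintype l] [Fintype m] [Fintype n] [Fintype p]
    (A : Matrix l m ℂ) (B : Matrix n p ℂ) : (A ⊗ₖ B)ᴴ = Aᴴ ⊗ₖ Bᴴ := by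
  ext ⟨i, j⟩ ⟨k, l⟩
  simp [Matrix.conjTranspose_apply, mul_comm]

lemma phaseDiag_conjT (N : ℕ) (φ : ℤ) : (phaseDiag N φ)ᴴ = phaseDiag N (-φ) := by
  unfold phaseDiag
  rw [Matrix.diagonal_conjTranspose]
  refine congrArg Matrix.diagonal ?_
  funext j
  rw [Pi.star_apply, Complex.star_def, ← Complex.exp_conj]
  congr 1
  rw [map_div₀]
  push_cast
  simp [Complex.conj_I, Complex.conj_ofNat]

lemma phaseDiag_mul (N : ℕ) (φ φ' : ℤ) :
    phaseDiag N φ' * phaseDiag N φ = phaseDiag N (φ' + φ) := by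
  unfold phaseDiag
  rw [Matrix.diagonal_mul_diagonal]
  refine congrArg Matrix.diagonal ?_
  funext j
  rw [← Complex.exp_add]
  congr 1
  push_cast
  ring

lemma apsp_mul_conjT (N : ℕ) (σ : ℝ) (hσ : 0 ≤ σ) (X : Matrix (Fin N) (Fin N) ℂ)
    (hXu : X * Xᴴ = 1) (φ φ' : ℤ) :
    apsp N σ X φ' * (apsp N σ X φ)ᴴ = (σ : ℂ) • phaseDiag N (φ' - φ) := by
  unfold apsp
  rw [Matrix.conjTranspose_smul, Matrix.smul_mul, Matrix.mul_smul, smul_smul]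
  rw [Matrix.conjTranspose_mul, Matrix.mul_assoc, ← Matrix.mul_assoc X, hXu, Matrix.one_mul,
    phaseDiag_conjT, phaseDiag_mul]
  rw [sub_eq_add_neg]
  rw [Complex.star_def, Complex.conj_ofReal, ← Complex.ofReal_mul, Real.mul_self_sqrt hσ]

/-- Cross-correlation of the multiple-symbol APSPs
`X_{k,(Q)} = √Q · U_{(φ_k mod Q),:} ⊗ X_{⌊φ_k/Q⌋}`:
`X_{k',(Q)} X_{k,(Q)}ᴴ = σ·Q·δ((φ_{k'} mod Q) − (φ_k mod Q)) · D_{⌊φ_{k'}/Q⌋ − ⌊φ_k/Q⌋}`. -/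
theorem apsp_multi_symbol_cross_correlation
    (N Q : ℕ) (hN : 0 < N) (hQ : 0 < Q) (σ : ℝ) (hσ : 0 < σ)
    (x : Fin N → ℂ) (X : Matrix (Fin N) (Fin N) ℂ)
    (hX : X = Matrix.diagonal x) (hXu : X * Xᴴ = 1)
    (U : Matrix (Fin Q) (Fin Q) ℂ) (hU : Uᴴ * U = 1) (hU' : U * Uᴴ = 1)
    (φk φk' : ℕ) (hφk : φk < Q * N) (hφk' : φk' < Q * N)
    (Xk Xk' : Matrix (Fin 1 × Fin N) (Fin Q × Fin N) ℂ)
    (hXk : Xk = (Real.sqrt Q : ℂ) •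
      ((Matrix.of fun (_ : Fin 1) (j : Fin Q) => U ⟨φk % Q, Nat.mod_lt _ hQ⟩ j) ⊗ₖ
        apsp N σ X ((φk / Q : ℕ) : ℤ)))
    (hXk' : Xk' = (Real.sqrt Q : ℂ) •
      ((Matrix.of fun (_ : Fin 1) (j : Fin Q) => U ⟨φk' % Q, Nat.mod_lt _ hQ⟩ j) ⊗ₖ
        apsp N σ X ((φk' / Q : ℕ) : ℤ))) :
    Xk' * Xkᴴ =
      ((σ : ℂ) * (Q : ℂ) * (if φk' % Q = φk % Q then 1 else 0)) •
        ((1 : Matrix (Fin 1) (Fin 1) ℂ) ⊗ₖ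
          phaseDiag N (((φk' / Q : ℕ) : ℤ) - ((φk / Q : ℕ) : ℤ))) := by
  subst hXk hXk'
  set r : Fin Q := ⟨φk % Q, Nat.mod_lt _ hQ⟩
  set r' : Fin Q := ⟨φk' % Q, Nat.mod_lt _ hQ⟩
  have hrow : (Matrix.of fun (_ : Fin 1) (j : Fin Q) => U r' j) *
      (Matrix.of fun (_ : Fin 1) (j : Fin Q) => U r j)ᴴ =
      ((if φk' % Q = φk % Q then 1 else 0) : ℂ) • (1 : Matrix (Fin 1) (Fin 1) ℂ) := by
    ext i j
    have h1 : (U * Uᴴ) r' r = if r' = r then 1 else 0 := by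
      rw [hU', Matrix.one_apply]
    have h2 : (r' = r) ↔ (φk' % Q = φk % Q) := by
      constructor
      · intro h; exact congrArg Fin.val h
      · intro h; exact Fin.ext h
    simp only [Matrix.mul_apply, Matrix.conjTranspose_apply, Matrix.of_apply] at h1 ⊢
    rw [Subsingleton.elim i j]
    simpa [Matrix.smul_apply, Matrix.one_apply, h2] using h1
  rw [Matrix.conjTranspose_smul, Matrix.smul_mul, Matrix.mul_smul, smul_smul,
    kronecker_conjT, ← Matrix.mul_kronecker_mul, hrow,
    apsp_mul_conjT N σ hσ.le X hXu, Matrix.smul_kronecker, Matrix.kronecker_smul,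
    smul_smul, smul_smul]
  congr 1
  rw [Complex.star_def, Complex.conj_ofReal, ← Complex.ofReal_mul,
    Real.mul_self_sqrt (Nat.cast_nonneg Q)]
  push_cast
  ring
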